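/- Let A and B be finite categories. (1) If k^• is a weighting on A and l^• is a weighting on B, then the function sending (a,b) to k^a · l^b is a weighting on the product category A × B; moreover if A and B have Möbius inversion then so does A × B, with μ_{A×B}((a,b),(a',b')) = μ_A(a,a') · μ_B(b,b'). (2) If k^• is a weighting on A and l^• is a weighting on B, then the function on the disjoint union category A ⊔ B restricting to k^• on A and to l^• on B is a weighting on A ⊔ B; moreover if A and B have Möbius inversion then so does A ⊔ B, with Möbius function restricting to μ_A and μ_B on the two summands and vanishing on pairs of objects lying in different summands. -/

import Mathlib

open CategoryTheory

/-- Hom-sets in the product of two finite categories are finite. -/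
instance prodHomFintype {A : Type u} [Category.{v} A] {B : Type u} [Category.{v} B]
    [∀ a b : A, Fintype (a ⟶ b)] [∀ a b : B, Fintype (a ⟶ b)]
    (p q : A × B) : Fintype (p ⟶ q) :=
  inferInstanceAs (Fintype ((p.1 ⟶ q.1) × (p.2 ⟶ q.2)))

/-- Hom-sets in the disjoint union of two finite categories are finite. -/
instance sumHomFintype {A : Type u} [Category.{v} A] {B : Type u} [Category.{v} B]
    [∀ a b : A, Fintype (a ⟶ b)] [∀ a b : B, Fintype (a ⟶ b)] :
    ∀ X Y : A ⊕ B, Fintype (X ⟶ Y)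
  | .inl a, .inl a' => inferInstanceAs (Fintype (ULift.{v} (a ⟶ a')))
  | .inl _, .inr _ => inferInstanceAs (Fintype PEmpty)
  | .inr _, .inl _ => inferInstanceAs (Fintype PEmpty)
  | .inr b, .inr b' => inferInstanceAs (Fintype (ULift.{v} (b ⟶ b')))

lemma cardProdHom {A : Type u} [Category.{v} A] {B : Type u} [Category.{v} B]
    [∀ a b : A, Fintype (a ⟶ b)] [∀ a b : B, Fintype (a ⟶ b)]
    (p q : A × B) :
    Fintype.card (p ⟶ q) = Fintype.card (p.1 ⟶ q.1) * Fintype.card (p.2 ⟶ q.2) := by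
  have : Fintype.card (p ⟶ q) = Fintype.card ((p.1 ⟶ q.1) × (p.2 ⟶ q.2)) := rfl
  rw [this, Fintype.card_prod]

section SumCards
variable {A : Type u} [Category.{v} A] {B : Type u} [Category.{v} B]
    [∀ a b : A, Fintype (a ⟶ b)] [∀ a b : B, Fintype (a ⟶ b)]

lemma cardLL (a a' : A) :
    Fintype.card ((Sum.inl a : A ⊕ B) ⟶ Sum.inl a') = Fintype.card (a ⟶ a') := by
  have : Fintype.card ((Sum.inl a : A ⊕ B) ⟶ Sum.inl a') = Fintype.card (ULift.{v} (a ⟶ a')) := rfl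
  rw [this, Fintype.card_ulift]
lemma cardRR (b b' : B) :
    Fintype.card ((Sum.inr b : A ⊕ B) ⟶ Sum.inr b') = Fintype.card (b ⟶ b') := by
  have : Fintype.card ((Sum.inr b : A ⊕ B) ⟶ Sum.inr b') = Fintype.card (ULift.{v} (b ⟶ b')) := rfl
  rw [this, Fintype.card_ulift]
lemma cardLR (a : A) (b : B) :
    Fintype.card ((Sum.inl a : A ⊕ B) ⟶ Sum.inr b) = 0 := rfl
lemma cardRL (b : B) (a : A) :
    Fintype.card ((Sum.inr b : A ⊕ B) ⟶ Sum.inl a) = 0 := rfl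

end SumCards

open scoped Classical in
/-- **Lemma 1.11** (Leinster). Weightings and Möbius functions are compatible
with products and disjoint unions of finite categories. -/
theorem stmt_6 {A : Type u} [Category.{v} A] [Fintype A]
    [∀ a b : A, Fintype (a ⟶ b)]
    {B : Type u} [Category.{v} B] [Fintype B]
    [∀ a b : B, Fintype (a ⟶ b)] :
    -- (1) products
    ((∀ (k : A → ℚ) (l : B → ℚ),
        (∀ a : A, ∑ a' : A, (Fintype.card (a ⟶ a') : ℚ) * k a' = 1) →
        (∀ b : B, ∑ b' : B, (Fintype.card (b ⟶ b') : ℚ) * l b' = 1) →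
        ∀ p : A × B, ∑ q : A × B, (Fintype.card (p ⟶ q) : ℚ) * (k q.1 * l q.2) = 1) ∧
     (∀ (μA : A → A → ℚ) (μB : B → B → ℚ),
        (∀ a c : A, ∑ b : A, μA a b * (Fintype.card (b ⟶ c) : ℚ) = if a = c then 1 else 0) →
        (∀ a c : A, ∑ b : A, (Fintype.card (a ⟶ b) : ℚ) * μA b c = if a = c then 1 else 0) →
        (∀ a c : B, ∑ b : B, μB a b * (Fintype.card (b ⟶ c) : ℚ) = if a = c then 1 else 0) →
        (∀ a c : B, ∑ b : B, (Fintype.card (a ⟶ b) : ℚ) * μB b c = if a = c then 1 else 0) →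
        (∀ p r : A × B,
          ∑ q : A × B, (μA p.1 q.1 * μB p.2 q.2) * (Fintype.card (q ⟶ r) : ℚ) =
            if p = r then 1 else 0) ∧
        (∀ p r : A × B,
          ∑ q : A × B, (Fintype.card (p ⟶ q) : ℚ) * (μA q.1 r.1 * μB q.2 r.2) =
            if p = r then 1 else 0))) ∧
    -- (2) disjoint unions
    ((∀ (k : A → ℚ) (l : B → ℚ),
        (∀ a : A, ∑ a' : A, (Fintype.card (a ⟶ a') : ℚ) * k a' = 1) →
        (∀ b : B, ∑ b' : B, (Fintype.card (b ⟶ b') : ℚ) * l b' = 1) →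
        ∀ X : A ⊕ B, ∑ Y : A ⊕ B, (Fintype.card (X ⟶ Y) : ℚ) * (Sum.elim k l Y) = 1) ∧
     (∀ (μA : A → A → ℚ) (μB : B → B → ℚ),
        (∀ a c : A, ∑ b : A, μA a b * (Fintype.card (b ⟶ c) : ℚ) = if a = c then 1 else 0) →
        (∀ a c : A, ∑ b : A, (Fintype.card (a ⟶ b) : ℚ) * μA b c = if a = c then 1 else 0) →
        (∀ a c : B, ∑ b : B, μB a b * (Fintype.card (b ⟶ c) : ℚ) = if a = c then 1 else 0) →
        (∀ a c : B, ∑ b : B, (Fintype.card (a ⟶ b) : ℚ) * μB b c = if a = c then 1 else 0) →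
        ∀ μ : (A ⊕ B) → (A ⊕ B) → ℚ,
          (∀ a a' : A, μ (.inl a) (.inl a') = μA a a') →
          (∀ b b' : B, μ (.inr b) (.inr b') = μB b b') →
          (∀ a b, μ (.inl a) (.inr b) = 0) → (∀ b a, μ (.inr b) (.inl a) = 0) →
          (∀ X Z : A ⊕ B,
            ∑ Y : A ⊕ B, μ X Y * (Fintype.card (Y ⟶ Z) : ℚ) = if X = Z then 1 else 0) ∧
          (∀ X Z : A ⊕ B,
            ∑ Y : A ⊕ B, (Fintype.card (X ⟶ Y) : ℚ) * μ Y Z = if X = Z then 1 else 0))) := by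
  constructor
  · constructor
    · intro k l hk hl p
      rw [Fintype.sum_prod_type]
      have : ∀ q1 : A, ∑ q2 : B, (Fintype.card (p ⟶ (q1, q2)) : ℚ) * (k q1 * l q2)
          = (Fintype.card (p.1 ⟶ q1) : ℚ) * k q1 := by
        intro q1
        have h2 : ∀ q2 : B, (Fintype.card (p ⟶ (q1, q2)) : ℚ) * (k q1 * l q2)
            = ((Fintype.card (p.1 ⟶ q1) : ℚ) * k q1)
              * ((Fintype.card (p.2 ⟶ q2) : ℚ) * l q2) := by
          intro q2; rw [cardProdHom]; push_cast; ring
        rw [Finset.sum_congr rfl fun q2 _ => h2 q2, ← Finset.mul_sum, hl p.2, mul_one]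
      rw [Finset.sum_congr rfl fun q1 _ => this q1, hk p.1]
    · intro μA μB hA1 hA2 hB1 hB2
      have key : ∀ (f : A → A → ℚ) (g : B → B → ℚ),
          (∀ a c : A, ∑ b : A, f a b = if a = c then 1 else 0) → True := fun _ _ _ => trivial
      constructor
      · intro p r
        rw [Fintype.sum_prod_type]
        have : ∀ q1 : A, ∑ q2 : B,
            (μA p.1 q1 * μB p.2 q2) * (Fintype.card ((q1, q2) ⟶ r) : ℚ)
            = (μA p.1 q1 * (Fintype.card (q1 ⟶ r.1) : ℚ))
              * (if p.2 = r.2 then 1 else 0) := by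
          intro q1
          have h2 : ∀ q2 : B,
              (μA p.1 q1 * μB p.2 q2) * (Fintype.card ((q1, q2) ⟶ r) : ℚ)
              = (μA p.1 q1 * (Fintype.card (q1 ⟶ r.1) : ℚ))
                * (μB p.2 q2 * (Fintype.card (q2 ⟶ r.2) : ℚ)) := by
            intro q2; rw [cardProdHom]; push_cast; ring
          rw [Finset.sum_congr rfl fun q2 _ => h2 q2, ← Finset.mul_sum, hB1 p.2 r.2]
        rw [Finset.sum_congr rfl fun q1 _ => this q1, ← Finset.sum_mul, hA1 p.1 r.1]
        by_cases h1 : p.1 = r.1 <;> by_cases h2 : p.2 = r.2 <;>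
          simp [h1, h2, Prod.ext_iff]
      · intro p r
        rw [Fintype.sum_prod_type]
        have : ∀ q1 : A, ∑ q2 : B,
            (Fintype.card (p ⟶ (q1, q2)) : ℚ) * (μA q1 r.1 * μB q2 r.2)
            = ((Fintype.card (p.1 ⟶ q1) : ℚ) * μA q1 r.1)
              * (if p.2 = r.2 then 1 else 0) := by
          intro q1
          have h2 : ∀ q2 : B,
              (Fintype.card (p ⟶ (q1, q2)) : ℚ) * (μA q1 r.1 * μB q2 r.2)
              = ((Fintype.card (p.1 ⟶ q1) : ℚ) * μA q1 r.1)
                * ((Fintype.card (p.2 ⟶ q2) : ℚ) * μB q2 r.2) := by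
            intro q2; rw [cardProdHom]; push_cast; ring
          rw [Finset.sum_congr rfl fun q2 _ => h2 q2, ← Finset.mul_sum, hB2 p.2 r.2]
        rw [Finset.sum_congr rfl fun q1 _ => this q1, ← Finset.sum_mul, hA2 p.1 r.1]
        by_cases h1 : p.1 = r.1 <;> by_cases h2 : p.2 = r.2 <;>
          simp [h1, h2, Prod.ext_iff]
  · constructor
    · intro k l hk hl X
      rw [Fintype.sum_sum_type]
      cases X with
      | inl a =>
        simp only [cardLL, cardLR, Sum.elim_inl, Sum.elim_inr, Nat.cast_zero, zero_mul,
          Finset.sum_const_zero, add_zero]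
        exact hk a
      | inr b =>
        simp only [cardRR, cardRL, Sum.elim_inl, Sum.elim_inr, Nat.cast_zero, zero_mul,
          Finset.sum_const_zero, zero_add]
        exact hl b
    · intro μA μB hA1 hA2 hB1 hB2 μ hll hrr hlr hrl
      constructor
      · intro X Z
        rw [Fintype.sum_sum_type]
        cases X with
        | inl a =>
          cases Z with
          | inl c =>
            simp only [hll, hlr, cardLL, cardRL, Nat.cast_zero, mul_zero, zero_mul,
              Finset.sum_const_zero, add_zero]
            rw [hA1 a c]; simp
          | inr c =>
            simp only [hll, hlr, cardLR, cardRL, Nat.cast_zero, mul_zero, zero_mul,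
              Finset.sum_const_zero, add_zero]
            simp
        | inr b =>
          cases Z with
          | inl c =>
            simp only [hrr, hrl, cardLL, cardRL, Nat.cast_zero, mul_zero, zero_mul,
              Finset.sum_const_zero, zero_add]
            simp
          | inr c =>
            simp only [hrr, hrl, cardRR, cardLR, Nat.cast_zero, mul_zero, zero_mul,
              Finset.sum_const_zero, zero_add]
            rw [hB1 b c]; simp
      · intro X Z
        rw [Fintype.sum_sum_type]
        cases X with
        | inl a =>
          cases Z with
          | inl c =>
            simp only [hll, hrl, cardLL, cardLR, Nat.cast_zero, mul_zero, zero_mul,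
              Finset.sum_const_zero, add_zero]
            rw [hA2 a c]; simp
          | inr c =>
            simp only [hlr, hrr, cardLL, cardLR, Nat.cast_zero, mul_zero, zero_mul,
              Finset.sum_const_zero, add_zero]
            simp
        | inr b =>
          cases Z with
          | inl c =>
            simp only [hrl, hll, cardRR, cardRL, Nat.cast_zero, mul_zero, zero_mul,
              Finset.sum_const_zero, zero_add]
            simp
          | inr c =>
            simp only [hrr, hlr, cardRR, cardRL, Nat.cast_zero, mul_zero, zero_mul,
              Finset.sum_const_zero, zero_add]
            rw [hB2 b c]; simp
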